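/- Let 0 < θ < 1 and φ(z) = |z|² on ℂ^d. Define V(z) = θ log|z| + θ/2 - (θ/2)log(θ/2) for |z| < √(θ/2); V(z) = |z|² for √(θ/2) ≤ |z| ≤ √(1/2); V(z) = log|z| + 1/2 - (1/2)log(1/2) for |z| ≥ √(1/2). Then V is continuous on ℂ^d \ {0}, V ≤ φ on ℂ^d, and V belongs to the class L_θ. -/

import Mathlib

open MeasureTheory Filter Topology

noncomputable section

/-- Extended-real logarithm: `elog x = log x` for `x > 0` and `-∞` for `x ≤ 0`. -/
def elog (x : ℝ) : EReal := if x ≤ 0 then ⊥ else ((Real.log x : ℝ) : EReal)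

/-- `u : ℂ^d → [-∞, ∞)` is plurisubharmonic: upper semicontinuous, never `+∞`, and
the truncations `max(u, -n)` satisfy the sub-mean value inequality on every circle
inside every complex line (this characterizes plurisubharmonicity, since
`max(u, -n)` is psh and decreases to `u`). -/
def IsPSH {d : ℕ} (u : EuclideanSpace ℂ (Fin d) → EReal) : Prop :=
  UpperSemicontinuous u ∧ (∀ z, u z ≠ ⊤) ∧
  ∀ (a b : EuclideanSpace ℂ (Fin d)) (r : ℝ), 0 < r → ∀ n : ℕ,
    u a ≤ (((2 * Real.pi)⁻¹ * ∫ t in (0:ℝ)..(2 * Real.pi),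
      (u (a + ((r : ℂ) * Complex.exp (t * Complex.I)) • b) ⊔ ((-(n : ℝ) : ℝ) : EReal)).toReal : ℝ) : EReal)

/-- The Lelong class `L`: psh functions with `u(z) ≤ log⁺|z| + C`. -/
def MemL {d : ℕ} (u : EuclideanSpace ℂ (Fin d) → EReal) : Prop :=
  IsPSH u ∧ ∃ C : ℝ, ∀ z, u z ≤ ((max 0 (Real.log ‖z‖) + C : ℝ) : EReal)

/-- The class `L_θ`: functions in `L` with `u(z) ≤ θ log|z| + C` on the unit ball. -/
def MemLtheta {d : ℕ} (θ : ℝ) (u : EuclideanSpace ℂ (Fin d) → EReal) : Prop :=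
  MemL u ∧ ∃ C : ℝ, ∀ z, ‖z‖ < 1 → u z ≤ (θ : EReal) * elog ‖z‖ + ((C : ℝ) : EReal)

/-- A set is pluripolar if it is contained in the `-∞` locus of a psh function
not identically `-∞`. -/
def Pluripolar {d : ℕ} (E : Set (EuclideanSpace ℂ (Fin d))) : Prop :=
  ∃ u : EuclideanSpace ℂ (Fin d) → EReal,
    IsPSH u ∧ (∃ z, u z ≠ ⊥) ∧ E ⊆ {z | u z = ⊥}

/-- An admissible weight on a closed set `K`: upper semicontinuous, nonnegative,
`{w > 0}` non-pluripolar, and `|z| w(z) → 0` as `|z| → ∞` in `K`. -/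
def AdmissibleWeight {d : ℕ} (K : Set (EuclideanSpace ℂ (Fin d)))
    (w : EuclideanSpace ℂ (Fin d) → ℝ) : Prop :=
  UpperSemicontinuousOn w K ∧ (∀ z ∈ K, 0 ≤ w z) ∧
  ¬ Pluripolar {z | z ∈ K ∧ 0 < w z} ∧
  ∀ ε > (0:ℝ), ∃ R : ℝ, ∀ z ∈ K, R ≤ ‖z‖ → ‖z‖ * w z < ε

/-- The weighted `θ`-incomplete extremal function
`V_{K,Q,θ}(z) = sup {u(z) : u ∈ L_θ, u ≤ Q on K}`. -/
def VKQtheta {d : ℕ} (K : Set (EuclideanSpace ℂ (Fin d)))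
    (Q : EuclideanSpace ℂ (Fin d) → ℝ) (θ : ℝ) (z : EuclideanSpace ℂ (Fin d)) : EReal :=
  ⨆ u ∈ {u : EuclideanSpace ℂ (Fin d) → EReal |
      MemLtheta θ u ∧ ∀ w ∈ K, u w ≤ ((Q w : ℝ) : EReal)}, u z

end

open Classical

/-- The candidate `θ`-incomplete extremal function for `φ(z) = |z|²` (`0 < θ < 1`),
with value `-∞` at the origin (where `θ log|z| = -∞`). -/
noncomputable def V15 {d : ℕ} (θ : ℝ) (z : EuclideanSpace ℂ (Fin d)) : EReal :=
  if z = 0 then ⊥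
  else if ‖z‖ < Real.sqrt (θ / 2) then
    ((θ * Real.log ‖z‖ + θ / 2 - (θ / 2) * Real.log (θ / 2) : ℝ) : EReal)
  else if ‖z‖ ≤ Real.sqrt (1 / 2) then ((‖z‖ ^ 2 : ℝ) : EReal)
  else ((Real.log ‖z‖ + 1 / 2 - (1 / 2) * Real.log (1 / 2) : ℝ) : EReal)


noncomputable section AuxForV15
set_option maxHeartbeats 1000000
open MeasureTheory Filter Topology intervalIntegral

noncomputable def Complex.abs : AbsoluteValue ℂ ℝ := NormedField.toAbsoluteValue ℂ
lemma Complex.abs_eq_norm' (z : ℂ) : Complex.abs z = ‖z‖ := rfl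
lemma Complex.abs_apply (z : ℂ) : Complex.abs z = Real.sqrt (Complex.normSq z) := rfl
lemma Complex.norm_eq_abs (z : ℂ) : ‖z‖ = Complex.abs z := rfl
lemma Complex.abs_exp_ofReal_mul_I (x : ℝ) : Complex.abs (Complex.exp (x * Complex.I)) = 1 :=
  Complex.norm_exp_ofReal_mul_I x
lemma Complex.abs_re_le_abs (z : ℂ) : |z.re| ≤ Complex.abs z := Complex.abs_re_le_norm z
lemma Complex.abs_conj (z : ℂ) : Complex.abs (starRingEnd ℂ z) = Complex.abs z := Complex.norm_conj z
lemma Complex.abs_ofReal (r : ℝ) : Complex.abs (r : ℂ) = |r| := Complex.norm_real r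
@[continuity, fun_prop] lemma Complex.continuous_abs_shim : Continuous Complex.abs :=
  continuous_norm
lemma Complex.sq_abs (z : ℂ) : Complex.abs z ^ 2 = Complex.normSq z := Complex.sq_norm z


lemma aux_countable (c : ℂ) : Set.Countable {t : ℝ | Complex.exp (t * Complex.I) = c} := by
  rcases Set.eq_empty_or_nonempty {t : ℝ | Complex.exp (t * Complex.I) = c} with h | ⟨t₀, ht₀⟩
  · simp [h]
  · have : {t : ℝ | Complex.exp (t * Complex.I) = c} ⊆
        Set.range (fun n : ℤ => t₀ + n * (2 * Real.pi)) := by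
      intro t ht
      have h1 : Complex.exp (((t : ℂ) - t₀) * Complex.I) = 1 := by
        rw [sub_mul, Complex.exp_sub, ht, ht₀, div_self]
        rw [← ht₀]; exact Complex.exp_ne_zero _
      rw [Complex.exp_eq_one_iff] at h1
      obtain ⟨n, hn⟩ := h1
      refine ⟨n, ?_⟩
      have hIne : (Complex.I : ℂ) ≠ 0 := Complex.I_ne_zero
      have hI : ((t : ℂ) - t₀) = n * (2 * Real.pi) := by
        have h3 : ((t : ℂ) - t₀) * Complex.I = ((n : ℂ) * (2 * Real.pi)) * Complex.I := by
          rw [hn]; ring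
        exact mul_right_cancel₀ hIne h3
      have h2 : (t - t₀ : ℝ) = (n : ℝ) * (2 * Real.pi) := by
        exact_mod_cast hI
      simp only []
      linarith
    exact Set.Countable.mono this (Set.countable_range _)

lemma aux_null (c : ℂ) : volume {t : ℝ | Complex.exp (t * Complex.I) = c} = 0 :=
  (aux_countable c).measure_zero _

lemma bdd_intervalIntegrable {f : ℝ → ℝ} (hf : Measurable f) {C : ℝ}
    (h : ∀ t, |f t| ≤ C) : IntervalIntegrable f volume 0 (2 * Real.pi) := by
  rw [intervalIntegrable_iff]
  refine Measure.integrableOn_of_bounded (M := C) ?_ hf.aestronglyMeasurable ?_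
  · exact ne_of_lt (lt_of_le_of_lt (measure_mono Set.uIoc_subset_uIcc)
      isCompact_uIcc.measure_lt_top)
  · exact Filter.Eventually.of_forall fun t => by simpa using h t

lemma abs_max_log_le {x M K : ℝ} (hx : 0 ≤ x) (hxM : x ≤ M) :
    |max (Real.log x) K| ≤ |K| + max 0 (Real.log M) := by
  rw [abs_le]
  constructor
  · have : -|K| ≤ K := neg_abs_le K
    have h0 : (0:ℝ) ≤ max 0 (Real.log M) := le_max_left _ _
    have := le_max_right (Real.log x) K
    linarith
  · have hlog : Real.log x ≤ max 0 (Real.log M) := by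
      rcases eq_or_lt_of_le hx with h | h
      · rw [← h, Real.log_zero]; exact le_max_left _ _
      · exact le_max_of_le_right (Real.log_le_log h hxM)
    have hK : K ≤ |K| := le_abs_self K
    have h0 : (0:ℝ) ≤ |K| := abs_nonneg K
    have h1 : (0:ℝ) ≤ max 0 (Real.log M) := le_max_left _ _
    exact max_le (by linarith) (by linarith)


lemma abs_one_add_pos {q : ℂ} (hq : Complex.abs q < 1) (z : ℂ) (hz : Complex.abs z ≤ 1) :
    1 - Complex.abs q ≤ Complex.abs (1 + q * z) := by
  have h1 : Complex.abs (q * z) ≤ Complex.abs q := by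
    rw [map_mul]
    calc Complex.abs q * Complex.abs z ≤ Complex.abs q * 1 :=
          mul_le_mul_of_nonneg_left hz (Complex.abs.nonneg q)
      _ = Complex.abs q := mul_one _
  have h2 : Complex.abs 1 ≤ Complex.abs (1 + q * z) + Complex.abs (q * z) := by
    calc Complex.abs 1 = Complex.abs ((1 + q * z) + (-(q * z))) := by ring_nf
      _ ≤ Complex.abs (1 + q * z) + Complex.abs (-(q * z)) := Complex.abs.add_le _ _
      _ = Complex.abs (1 + q * z) + Complex.abs (q * z) := by rw [Complex.abs.map_neg]
  simp only [map_one] at h2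
  linarith

lemma lemA1 {q : ℂ} (hq : Complex.abs q < 1) :
    ∫ t in (0:ℝ)..(2 * Real.pi), Real.log (Complex.abs (1 + q * Complex.exp (t * Complex.I))) = 0 := by
  set f : ℂ → ℂ := fun z => Complex.log (1 + q * z) with hf
  have hmem : ∀ z ∈ Metric.closedBall (0:ℂ) 1, (1 + q * z) ∈ Complex.slitPlane := by
    intro z hz
    rw [Metric.mem_closedBall, dist_zero_right] at hz
    rw [Complex.mem_slitPlane_iff]
    left
    have h1 : Complex.abs (q * z) < 1 := by
      rw [map_mul]
      calc Complex.abs q * Complex.abs z ≤ Complex.abs q * 1 :=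
            mul_le_mul_of_nonneg_left hz (Complex.abs.nonneg q)
        _ = Complex.abs q := mul_one _
        _ < 1 := hq
    have h2 : -Complex.abs (q * z) ≤ (q * z).re := by
      have := Complex.abs_re_le_abs (q * z)
      have := abs_le.mp this
      linarith [this.1]
    have : (1 + q * z).re = 1 + (q * z).re := by simp
    rw [this]
    linarith
  have hdiff : ∀ z ∈ Metric.closedBall (0:ℂ) 1, DifferentiableAt ℂ f z := by
    intro z hz
    exact (Complex.differentiableAt_log (hmem z hz)).comp z
      ((differentiableAt_const (1:ℂ)).add ((differentiableAt_id).const_mul q))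
  have hd : DifferentiableOn ℂ f (Metric.closedBall 0 1) :=
    fun z hz => (hdiff z hz).differentiableWithinAt
  have hc := hd.circleIntegral_sub_inv_smul (w := 0) (by simp)
  have hf0 : f 0 = 0 := by simp [hf]
  rw [hf0, smul_zero] at hc
  -- unfold circle integral
  rw [circleIntegral] at hc
  simp only [deriv_circleMap, circleMap, Complex.ofReal_one, zero_add, one_mul, sub_zero,
    smul_eq_mul] at hc
  have hrw : ∀ t : ℝ, Complex.exp (t * Complex.I) * Complex.I *
      ((Complex.exp (t * Complex.I))⁻¹ * f (Complex.exp (t * Complex.I)))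
      = Complex.I * f (Complex.exp (t * Complex.I)) := by
    intro t
    field_simp [Complex.exp_ne_zero]
  rw [intervalIntegral.integral_congr (fun t _ => hrw t)] at hc
  rw [intervalIntegral.integral_const_mul] at hc
  have hI0 : ∫ t in (0:ℝ)..(2*Real.pi), f (Complex.exp (t * Complex.I)) = 0 := by
    rcases mul_eq_zero.mp hc with h | h
    · exact absurd h Complex.I_ne_zero
    · exact h
  have hint : IntervalIntegrable (fun t : ℝ => f (Complex.exp (t * Complex.I)))
      volume 0 (2*Real.pi) := by
    apply Continuous.intervalIntegrable
    rw [continuous_iff_continuousAt]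
    intro t
    have hcb : Complex.exp ((t:ℂ) * Complex.I) ∈ Metric.closedBall (0:ℂ) 1 := by
      simp [Metric.mem_closedBall, dist_zero_right, Complex.norm_eq_abs,
        Complex.abs_exp_ofReal_mul_I]
    have hin : Continuous fun t : ℝ => Complex.exp ((t:ℂ) * Complex.I) := by continuity
    exact ContinuousAt.comp (x := t) (f := fun t : ℝ => Complex.exp ((t:ℂ) * Complex.I))
      (hdiff _ hcb).continuousAt hin.continuousAt
  have hre := Complex.reCLM.intervalIntegral_comp_comm hint
  rw [hI0] at hre
  simp only [Complex.reCLM_apply] at hre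
  have : ∀ t : ℝ, (f (Complex.exp (t * Complex.I))).re
      = Real.log (Complex.abs (1 + q * Complex.exp (t * Complex.I))) := by
    intro t; simp [hf, Complex.log_re, Complex.abs_eq_norm']
  rw [intervalIntegral.integral_congr (fun t _ => this t)] at hre
  rw [hre]; simp


lemma measurable_maxlog (q : ℂ) (K : ℝ) :
    Measurable fun t : ℝ => max (Real.log (Complex.abs (1 + q * Complex.exp (t * Complex.I)))) K := by
  have hc : Continuous fun t : ℝ => Complex.abs (1 + q * Complex.exp ((t:ℂ) * Complex.I)) := by
    continuity
  exact (Real.measurable_log.comp hc.measurable).max measurable_const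

lemma intInt_maxlog (q : ℂ) (K : ℝ) :
    IntervalIntegrable
      (fun t : ℝ => max (Real.log (Complex.abs (1 + q * Complex.exp (t * Complex.I)))) K)
      volume 0 (2 * Real.pi) := by
  apply bdd_intervalIntegrable (measurable_maxlog q K) (C := |K| + max 0 (Real.log (1 + Complex.abs q)))
  intro t
  apply abs_max_log_le (Complex.abs.nonneg _)
  calc Complex.abs (1 + q * Complex.exp (t * Complex.I))
      ≤ Complex.abs 1 + Complex.abs (q * Complex.exp (t * Complex.I)) := Complex.abs.add_le _ _
    _ = 1 + Complex.abs q := by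
        rw [map_one, map_mul, Complex.abs_exp_ofReal_mul_I, mul_one]

lemma lemA2 {q : ℂ} (hq : Complex.abs q < 1) (K : ℝ) :
    0 ≤ ∫ t in (0:ℝ)..(2 * Real.pi),
      max (Real.log (Complex.abs (1 + q * Complex.exp (t * Complex.I)))) K := by
  have hpos : ∀ t : ℝ, 0 < Complex.abs (1 + q * Complex.exp (t * Complex.I)) := by
    intro t
    have := abs_one_add_pos hq (Complex.exp (t * Complex.I))
      (le_of_eq (Complex.abs_exp_ofReal_mul_I t))
    linarith
  have hcont : Continuous fun t : ℝ =>
      Real.log (Complex.abs (1 + q * Complex.exp ((t:ℂ) * Complex.I))) := by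
    rw [continuous_iff_continuousAt]
    intro t
    have hc : Continuous fun t : ℝ => Complex.abs (1 + q * Complex.exp ((t:ℂ) * Complex.I)) := by
      continuity
    exact ContinuousAt.comp (x := t) (f := fun t : ℝ => Complex.abs (1 + q * Complex.exp ((t:ℂ) * Complex.I)))
      (Real.continuousAt_log (ne_of_gt (hpos t))) hc.continuousAt
  have h1 : ∫ t in (0:ℝ)..(2 * Real.pi),
      Real.log (Complex.abs (1 + q * Complex.exp (t * Complex.I))) = 0 := lemA1 hq
  calc (0:ℝ) = ∫ t in (0:ℝ)..(2 * Real.pi),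
      Real.log (Complex.abs (1 + q * Complex.exp (t * Complex.I))) := h1.symm
    _ ≤ _ := intervalIntegral.integral_mono_on (by positivity)
      (hcont.intervalIntegrable _ _) (intInt_maxlog q K) (fun t _ => le_max_left _ _)

lemma lemA (q : ℂ) (K : ℝ) :
    0 ≤ ∫ t in (0:ℝ)..(2 * Real.pi),
      max (Real.log (Complex.abs (1 + q * Complex.exp (t * Complex.I)))) K := by
  rcases lt_trichotomy (Complex.abs q) 1 with h | h | h
  · exact lemA2 h K
  · -- |q| = 1 : dominated convergence
    have hq0 : q ≠ 0 := by
      intro h0; rw [h0] at h; simp at h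
    set F : ℕ → ℝ → ℝ := fun k t =>
      max (Real.log (Complex.abs (1 + ((1 - ((k:ℝ)+1)⁻¹ : ℝ) : ℂ) * q * Complex.exp (t * Complex.I)))) K with hF
    have hsk : ∀ k : ℕ, (0:ℝ) ≤ 1 - ((k:ℝ)+1)⁻¹ ∧ (1 - ((k:ℝ)+1)⁻¹ : ℝ) < 1 := by
      intro k
      constructor
      · have h1 : ((k:ℝ)+1)⁻¹ ≤ 1 := by
          rw [inv_le_one_iff₀]; right; linarith [Nat.cast_nonneg (α := ℝ) k]
        linarith
      · have : (0:ℝ) < ((k:ℝ)+1)⁻¹ := by positivity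
        linarith
    have habs : ∀ k : ℕ, Complex.abs (((1 - ((k:ℝ)+1)⁻¹ : ℝ) : ℂ) * q) < 1 := by
      intro k
      rw [map_mul, Complex.abs_ofReal, abs_of_nonneg (hsk k).1, h, mul_one]
      exact (hsk k).2
    have hbase : ∀ k : ℕ, 0 ≤ ∫ t in (0:ℝ)..(2 * Real.pi), F k t := by
      intro k
      exact lemA2 (habs k) K
    have hlim : Tendsto (fun k => ∫ t in (0:ℝ)..(2 * Real.pi), F k t) atTop
        (𝓝 (∫ t in (0:ℝ)..(2 * Real.pi),
          max (Real.log (Complex.abs (1 + q * Complex.exp (t * Complex.I)))) K)) := by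
      apply intervalIntegral.tendsto_integral_filter_of_dominated_convergence
        (bound := fun _ => |K| + max 0 (Real.log 2))
      · filter_upwards with k
        exact (measurable_maxlog (((1 - ((k:ℝ)+1)⁻¹ : ℝ) : ℂ) * q) K).aestronglyMeasurable
      · filter_upwards with k
        filter_upwards with t _
        rw [Real.norm_eq_abs]
        apply abs_max_log_le (Complex.abs.nonneg _)
        calc Complex.abs (1 + ((1 - ((k:ℝ)+1)⁻¹ : ℝ) : ℂ) * q * Complex.exp (t * Complex.I))
            ≤ 1 + Complex.abs (((1 - ((k:ℝ)+1)⁻¹ : ℝ) : ℂ) * q * Complex.exp (t * Complex.I)) := by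
              calc Complex.abs (1 + _) ≤ Complex.abs 1 + _ := Complex.abs.add_le _ _
                _ = 1 + _ := by rw [map_one]
          _ ≤ 2 := by
              rw [map_mul, Complex.abs_exp_ofReal_mul_I, mul_one, map_mul, h, mul_one,
                Complex.abs_ofReal, abs_of_nonneg (hsk k).1]
              linarith [(hsk k).2]
      · exact bdd_intervalIntegrable measurable_const (C := |K| + max 0 (Real.log 2))
          (fun t => le_of_eq (abs_of_nonneg (by positivity)))
      · have hnull : ∀ᵐ t : ℝ, Complex.exp (t * Complex.I) ≠ -q⁻¹ := by
          rw [MeasureTheory.ae_iff]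
          convert aux_null (-q⁻¹) using 2
          ext t; simp
        filter_upwards [hnull] with t ht _
        have hne : (1 : ℂ) + q * Complex.exp (t * Complex.I) ≠ 0 := by
          intro h0
          apply ht
          have h1 : q * Complex.exp (t * Complex.I) = -1 := by linear_combination h0
          field_simp
          linear_combination h1
        have hapos : 0 < Complex.abs (1 + q * Complex.exp (t * Complex.I)) :=
          Complex.abs.pos hne
        have hs : Tendsto (fun k : ℕ => (1 - ((k:ℝ)+1)⁻¹ : ℝ)) atTop (𝓝 1) := by
          have h0 : Tendsto (fun k : ℕ => ((k:ℝ)+1)⁻¹) atTop (𝓝 0) := by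
            simpa [one_div] using tendsto_one_div_add_atTop_nhds_zero_nat (𝕜 := ℝ)
          simpa using tendsto_const_nhds.sub h0
        have hcont : ContinuousAt (fun s : ℝ =>
            max (Real.log (Complex.abs (1 + (s:ℂ) * q * Complex.exp (t * Complex.I)))) K) 1 := by
          have hca : Continuous fun s : ℝ =>
              Complex.abs (1 + (s:ℂ) * q * Complex.exp (t * Complex.I)) := by continuity
          have hl : ContinuousAt Real.log
              (Complex.abs (1 + ((1:ℝ):ℂ) * q * Complex.exp (t * Complex.I))) := by
            apply Real.continuousAt_log
            simpa using ne_of_gt hapos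
          exact ContinuousAt.sup (ContinuousAt.comp (x := (1:ℝ))
            (f := fun s : ℝ => Complex.abs (1 + (s:ℂ) * q * Complex.exp (t * Complex.I)))
            hl hca.continuousAt) continuousAt_const
        have := Filter.Tendsto.comp hcont hs
        simp only [Function.comp_def] at this
        convert this using 2
        simp
    exact ge_of_tendsto' hlim hbase
  · -- |q| > 1
    set p : ℂ := (starRingEnd ℂ q)⁻¹ with hp
    have hq0 : q ≠ 0 := by
      intro h0; rw [h0] at h; simp at h; linarith
    have habsp : Complex.abs p < 1 := by
      rw [hp, map_inv₀, Complex.abs_conj]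
      rw [inv_lt_one_iff₀]; right; exact h
    have hple : ∀ t : ℝ,
        max (Real.log (Complex.abs (1 + p * Complex.exp (t * Complex.I)))) K ≤
        max (Real.log (Complex.abs (1 + q * Complex.exp (t * Complex.I)))) K := by
      intro t
      set e := Complex.exp (t * Complex.I) with he
      have habse : Complex.abs e = 1 := Complex.abs_exp_ofReal_mul_I t
      have hppos : 0 < Complex.abs (1 + p * e) := by
        have := abs_one_add_pos habsp e (le_of_eq habse)
        linarith
      have hkey : Complex.abs (1 + p * e) ≤ Complex.abs (1 + q * e) := by
        have hm : 1 < Complex.abs q := h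
        set m := Complex.abs q with hmdef
        have hm0 : (0:ℝ) < m := by linarith
        have hnsq : Complex.normSq q = m ^ 2 := by rw [hmdef, Complex.sq_abs]
        have hnse : Complex.normSq e = 1 := by
          rw [← Complex.sq_abs, habse]; norm_num
        have hcq : (starRingEnd ℂ q) ≠ 0 := by simpa using hq0
        have hnq0 : ((Complex.normSq q : ℝ) : ℂ) ≠ 0 := by
          simp only [ne_eq, Complex.ofReal_eq_zero]
          rw [hnsq]; positivity
        have hpe_eq : p * e = (q * e) / ((Complex.normSq q : ℝ) : ℂ) := by
          rw [hp, eq_div_iff hnq0, ← Complex.mul_conj q]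
          field_simp
        have hpe_re : (p * e).re = (q * e).re / Complex.normSq q := by
          rw [hpe_eq, Complex.div_ofReal_re]
        clear_value p
        have hnspe : Complex.normSq (p * e) = (Complex.normSq q)⁻¹ := by
          rw [map_mul, hnse, mul_one, hp, map_inv₀, Complex.normSq_conj]
        set x := (q * e).re with hxdef
        have hxge : -m ≤ x := by
          have h1 : |x| ≤ Complex.abs (q * e) := Complex.abs_re_le_abs _
          rw [map_mul, habse, mul_one, ← hmdef] at h1
          linarith [abs_le.mp h1]
        have hA : Complex.normSq (1 + p * e) = 1 + (m^2)⁻¹ + 2 * (x / m^2) := by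
          rw [Complex.normSq_add, hnspe, hnsq, Complex.normSq_one]
          have h1 : ((1:ℂ) * (starRingEnd ℂ) (p * e)).re = (p * e).re := by
            rw [one_mul, Complex.conj_re]
          rw [h1, hpe_re, hnsq]
        have hB : Complex.normSq (1 + q * e) = 1 + m^2 + 2 * x := by
          rw [Complex.normSq_add, map_mul, hnse, mul_one, hnsq, Complex.normSq_one]
          have h1 : ((1:ℂ) * (starRingEnd ℂ) (q * e)).re = x := by
            rw [one_mul, Complex.conj_re, hxdef]
          rw [h1]
        have hfac1 : (0:ℝ) ≤ m^2 - 1 := by nlinarith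
        have hfac2 : (0:ℝ) ≤ m^2 + 1 + 2*x := by nlinarith [sq_nonneg (m-1)]
        have hprod := mul_nonneg hfac1 hfac2
        have hns_le : Complex.normSq (1 + p * e) ≤ Complex.normSq (1 + q * e) := by
          have hm2 : (0:ℝ) < m^2 := by positivity
          rw [hA, hB]
          rw [show (1:ℝ) + (m^2)⁻¹ + 2*(x/m^2) = 1 + (1 + 2*x)/m^2 by field_simp; ring]
          have hd : (1 + 2*x)/m^2 ≤ m^2 + 2*x := by
            rw [div_le_iff₀ hm2]; nlinarith [hprod]
          linarith
        rw [Complex.abs_apply, Complex.abs_apply]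
        exact Real.sqrt_le_sqrt hns_le
      apply max_le_max _ (le_refl K)
      exact Real.log_le_log hppos hkey
    calc (0:ℝ) ≤ ∫ t in (0:ℝ)..(2 * Real.pi),
          max (Real.log (Complex.abs (1 + p * Complex.exp (t * Complex.I)))) K := lemA2 habsp K
      _ ≤ _ := intervalIntegral.integral_mono_on (by positivity)
          (intInt_maxlog p K) (intInt_maxlog q K) (fun t _ => hple t)

section EuclideanAux
variable {d : ℕ}
local notation "E" => EuclideanSpace ℂ (Fin d)




lemma measurable_wnorm (a b : E) (r : ℝ) (K : ℝ) :
    Measurable fun t : ℝ =>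
      max (Real.log ‖a + ((r : ℂ) * Complex.exp (t * Complex.I)) • b‖) K := by
  have hw : Continuous fun t : ℝ => ‖a + ((r : ℂ) * Complex.exp ((t:ℂ) * Complex.I)) • b‖ := by
    continuity
  exact (Real.measurable_log.comp hw.measurable).max measurable_const

lemma wnorm_le (a b : E) (r : ℝ) (t : ℝ) :
    ‖a + ((r : ℂ) * Complex.exp (t * Complex.I)) • b‖ ≤ ‖a‖ + |r| * ‖b‖ := by
  calc ‖a + ((r : ℂ) * Complex.exp (t * Complex.I)) • b‖
      ≤ ‖a‖ + ‖((r : ℂ) * Complex.exp (t * Complex.I)) • b‖ := norm_add_le _ _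
    _ = ‖a‖ + |r| * ‖b‖ := by
        rw [norm_smul]
        congr 1
        rw [norm_mul, Complex.norm_eq_abs, Complex.norm_eq_abs, Complex.abs_ofReal,
          Complex.abs_exp_ofReal_mul_I, mul_one]

lemma intInt_wnorm (a b : E) (r : ℝ) (K : ℝ) :
    IntervalIntegrable
      (fun t : ℝ => max (Real.log ‖a + ((r : ℂ) * Complex.exp (t * Complex.I)) • b‖) K)
      volume 0 (2 * Real.pi) := by
  apply bdd_intervalIntegrable (measurable_wnorm a b r K)
    (C := |K| + max 0 (Real.log (‖a‖ + |r| * ‖b‖)))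
  intro t
  exact abs_max_log_le (norm_nonneg _) (wnorm_le a b r t)

lemma lemB (a b : E) (ha : a ≠ 0) (r : ℝ) (K : ℝ) :
    2 * Real.pi * Real.log ‖a‖ ≤
      ∫ t in (0:ℝ)..(2 * Real.pi),
        max (Real.log ‖a + ((r : ℂ) * Complex.exp (t * Complex.I)) • b‖) K := by
  have hna : (0:ℝ) < ‖a‖ := norm_pos_iff.mpr ha
  obtain ⟨β, hβ⟩ : ∃ β : ℂ, (inner ℂ a b : ℂ) = β := ⟨_, rfl⟩
  set q : ℂ := (r : ℂ) * β / ((‖a‖ : ℂ) ^ 2) with hq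
  have hna2 : ((‖a‖ : ℝ) : ℂ) ^ 2 ≠ 0 :=
    pow_ne_zero 2 (by exact_mod_cast ne_of_gt hna)
  -- pointwise comparison off a null set
  have hpt : ∀ t : ℝ, (1 + q * Complex.exp (t * Complex.I)) ≠ 0 →
      Real.log ‖a‖ + max (Real.log (Complex.abs (1 + q * Complex.exp (t * Complex.I))))
        (K - Real.log ‖a‖) ≤
      max (Real.log ‖a + ((r : ℂ) * Complex.exp (t * Complex.I)) • b‖) K := by
    intro t hne
    set e : ℂ := Complex.exp (t * Complex.I) with he
    set w : E := a + ((r : ℂ) * e) • b with hw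
    have hinner : (inner ℂ a w : ℂ) = (‖a‖ : ℂ) ^ 2 * (1 + q * e) := by
      rw [hw, inner_add_right, inner_smul_right, inner_self_eq_norm_sq_to_K, hβ, hq]
      have : ((‖a‖:ℝ):ℂ) ≠ 0 := by exact_mod_cast ne_of_gt hna
      field_simp
      ring_nf
      exact add_comm _ _
    have habs : Complex.abs (inner ℂ a w : ℂ) = ‖a‖ ^ 2 * Complex.abs (1 + q * e) := by
      rw [hinner, map_mul]
      congr 1
      rw [← Complex.ofReal_pow, Complex.abs_ofReal, abs_of_nonneg (by positivity)]
    have hcs : Complex.abs (inner ℂ a w : ℂ) ≤ ‖a‖ * ‖w‖ := by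
      have := norm_inner_le_norm (𝕜 := ℂ) a w
      rwa [Complex.norm_eq_abs] at this
    have hle : ‖a‖ * Complex.abs (1 + q * e) ≤ ‖w‖ := by
      have h1 : ‖a‖ ^ 2 * Complex.abs (1 + q * e) ≤ ‖a‖ * ‖w‖ := by
        rw [← habs]; exact hcs
      nlinarith [Complex.abs.nonneg (1 + q * e), hna]
    have hqe_pos : 0 < Complex.abs (1 + q * e) := Complex.abs.pos hne
    have hlog : Real.log ‖a‖ + Real.log (Complex.abs (1 + q * e))
        = Real.log (‖a‖ * Complex.abs (1 + q * e)) :=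
      (Real.log_mul (ne_of_gt hna) (ne_of_gt hqe_pos)).symm
    have hmono : Real.log (‖a‖ * Complex.abs (1 + q * e)) ≤ Real.log ‖w‖ :=
      Real.log_le_log (by positivity) hle
    rw [← max_add_add_left]
    apply max_le
    · rw [hlog]
      exact le_max_of_le_left hmono
    · have : Real.log ‖a‖ + (K - Real.log ‖a‖) = K := by ring
      rw [this]
      exact le_max_right _ _
  have hae : ∀ᵐ t : ℝ, (1 + q * Complex.exp (t * Complex.I)) ≠ 0 := by
    by_cases hq0 : q = 0
    · filter_upwards with t; rw [hq0]; simp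
    · have : {t : ℝ | (1:ℂ) + q * Complex.exp (t * Complex.I) = 0} ⊆
          {t : ℝ | Complex.exp (t * Complex.I) = -q⁻¹} := by
        intro t ht
        simp only [Set.mem_setOf_eq] at *
        have h1 : q * Complex.exp (t * Complex.I) = -1 := by linear_combination ht
        field_simp
        linear_combination h1
      rw [MeasureTheory.ae_iff]
      push_neg
      exact measure_mono_null (by intro t ht; simpa using ht) (measure_mono_null this (aux_null _))
  -- integrability of comparison function
  have hcomp_meas : Measurable fun t : ℝ =>
      Real.log ‖a‖ + max (Real.log (Complex.abs (1 + q * Complex.exp (t * Complex.I))))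
        (K - Real.log ‖a‖) := by
    have hc : Continuous fun t : ℝ => Complex.abs (1 + q * Complex.exp ((t:ℂ) * Complex.I)) := by
      continuity
    exact measurable_const.add ((Real.measurable_log.comp hc.measurable).max measurable_const)
  have hcomp_int : IntervalIntegrable
      (fun t : ℝ => Real.log ‖a‖ +
        max (Real.log (Complex.abs (1 + q * Complex.exp (t * Complex.I)))) (K - Real.log ‖a‖))
      volume 0 (2 * Real.pi) := by
    apply bdd_intervalIntegrable hcomp_meas
      (C := |Real.log ‖a‖| + (|K - Real.log ‖a‖| + max 0 (Real.log (1 + Complex.abs q))))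
    intro t
    calc |Real.log ‖a‖ + max (Real.log (Complex.abs (1 + q * Complex.exp (t * Complex.I))))
          (K - Real.log ‖a‖)|
        ≤ |Real.log ‖a‖| + |max (Real.log (Complex.abs (1 + q * Complex.exp (t * Complex.I))))
          (K - Real.log ‖a‖)| := abs_add_le _ _
      _ ≤ _ := by
          gcongr
          apply abs_max_log_le (Complex.abs.nonneg _)
          calc Complex.abs (1 + q * Complex.exp (t * Complex.I))
              ≤ Complex.abs 1 + Complex.abs (q * Complex.exp (t * Complex.I)) :=
                Complex.abs.add_le _ _
            _ = 1 + Complex.abs q := by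
                rw [map_one, map_mul, Complex.abs_exp_ofReal_mul_I, mul_one]
  have hmono : ∫ t in (0:ℝ)..(2 * Real.pi),
      (Real.log ‖a‖ + max (Real.log (Complex.abs (1 + q * Complex.exp (t * Complex.I))))
        (K - Real.log ‖a‖)) ≤
      ∫ t in (0:ℝ)..(2 * Real.pi),
        max (Real.log ‖a + ((r : ℂ) * Complex.exp (t * Complex.I)) • b‖) K := by
    apply intervalIntegral.integral_mono_ae (by positivity) hcomp_int (intInt_wnorm a b r K)
    filter_upwards [hae] with t ht
    exact hpt t ht
  have hsplit : ∫ t in (0:ℝ)..(2 * Real.pi),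
      (Real.log ‖a‖ + max (Real.log (Complex.abs (1 + q * Complex.exp (t * Complex.I))))
        (K - Real.log ‖a‖)) =
      2 * Real.pi * Real.log ‖a‖ +
      ∫ t in (0:ℝ)..(2 * Real.pi),
        max (Real.log (Complex.abs (1 + q * Complex.exp (t * Complex.I)))) (K - Real.log ‖a‖) := by
    rw [intervalIntegral.integral_add (intervalIntegrable_const)
      (by
        have := hcomp_int
        have h2 : IntervalIntegrable
            (fun t : ℝ => (Real.log ‖a‖ +
              max (Real.log (Complex.abs (1 + q * Complex.exp (t * Complex.I))))
                (K - Real.log ‖a‖)) - Real.log ‖a‖) volume 0 (2 * Real.pi) :=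
          hcomp_int.sub intervalIntegrable_const
        simpa using h2)]
    rw [intervalIntegral.integral_const]
    simp
  have hA := lemA q (K - Real.log ‖a‖)
  calc 2 * Real.pi * Real.log ‖a‖
      ≤ 2 * Real.pi * Real.log ‖a‖ +
        ∫ t in (0:ℝ)..(2 * Real.pi),
          max (Real.log (Complex.abs (1 + q * Complex.exp (t * Complex.I)))) (K - Real.log ‖a‖) := by
        linarith
    _ = _ := hsplit.symm
    _ ≤ _ := hmono

end EuclideanAux


noncomputable def gth (θ : ℝ) (x : ℝ) : ℝ :=
  if Real.log (Real.sqrt (θ/2)) ≤ x then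
    (if x ≤ Real.log (Real.sqrt (1/2)) then Real.exp (2*x)
     else x + 1/2 - (1/2)*Real.log (1/2))
  else θ*x + θ/2 - (θ/2)*Real.log (θ/2)

variable {θ : ℝ}

lemma hxa (hθ0 : 0 < θ) : Real.log (Real.sqrt (θ/2)) = Real.log (θ/2)/2 :=
  Real.log_sqrt (by positivity)

lemma hxb : Real.log (Real.sqrt ((1:ℝ)/2)) = Real.log ((1:ℝ)/2)/2 :=
  Real.log_sqrt (by norm_num)

lemma hexa (hθ0 : 0 < θ) : Real.exp (2*(Real.log (θ/2)/2)) = θ/2 := by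
  rw [show 2*(Real.log (θ/2)/2) = Real.log (θ/2) by ring, Real.exp_log (by positivity)]

lemma hexb : Real.exp (2*(Real.log ((1:ℝ)/2)/2)) = 1/2 := by
  rw [show 2*(Real.log ((1:ℝ)/2)/2) = Real.log ((1:ℝ)/2) by ring, Real.exp_log (by norm_num)]

lemma tangent_le_exp {s : ℝ} (hs : 0 < s) (x : ℝ) :
    s*x + s/2 - s/2*Real.log (s/2) ≤ Real.exp (2*x) := by
  have h1 : Real.exp (2*x) = (s/2) * Real.exp (2*x - Real.log (s/2)) := by
    rw [Real.exp_sub, Real.exp_log (by positivity)]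
    field_simp
  have h2 := Real.add_one_le_exp (2*x - Real.log (s/2))
  nlinarith [h2, hs]

lemma P1 (hθ0 : 0 < θ) (hθ1 : θ < 1) {s : ℝ} (hs1 : θ ≤ s) (hs2 : s ≤ 1) (x : ℝ) :
    s*x + s/2 - s/2*Real.log (s/2) ≤ gth θ x := by
  have hs0 : 0 < s := lt_of_lt_of_le hθ0 hs1
  unfold gth
  split_ifs with h1 h2
  · exact tangent_le_exp hs0 x
  · -- x > xb
    push_neg at h2
    have ht := tangent_le_exp hs0 (Real.log ((1:ℝ)/2)/2)
    rw [hexb] at ht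
    rw [hxb] at h2
    nlinarith [mul_nonneg (sub_nonneg.mpr hs2) (le_of_lt (sub_pos.mpr h2))]
  · -- x < xa
    push_neg at h1
    have ht := tangent_le_exp hs0 (Real.log (θ/2)/2)
    rw [hexa hθ0] at ht
    rw [hxa hθ0] at h1
    nlinarith [mul_nonneg (sub_nonneg.mpr hs1) (le_of_lt (sub_pos.mpr h1))]

lemma P2 (hθ0 : 0 < θ) (hθ1 : θ < 1) (x : ℝ) :
    ∃ s : ℝ, θ ≤ s ∧ s ≤ 1 ∧ gth θ x = s*x + s/2 - s/2*Real.log (s/2) := by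
  unfold gth
  split_ifs with h1 h2
  · refine ⟨2*Real.exp (2*x), ?_, ?_, ?_⟩
    · rw [hxa hθ0] at h1
      have := Real.exp_le_exp.mpr (mul_le_mul_of_nonneg_left h1 (by norm_num : (0:ℝ) ≤ 2))
      rw [hexa hθ0] at this
      linarith
    · rw [hxb] at h2
      have := Real.exp_le_exp.mpr (mul_le_mul_of_nonneg_left h2 (by norm_num : (0:ℝ) ≤ 2))
      rw [hexb] at this
      linarith
    · have hl : Real.log (2*Real.exp (2*x)/2) = 2*x := by
        rw [show 2*Real.exp (2*x)/2 = Real.exp (2*x) by ring, Real.log_exp]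
      rw [hl]
      ring
  · exact ⟨1, le_of_lt hθ1, le_refl 1, by ring⟩
  · exact ⟨θ, le_refl θ, le_of_lt hθ1, by ring⟩

lemma gth_cont (hθ0 : 0 < θ) (hθ1 : θ < 1) : Continuous (gth θ) := by
  unfold gth
  have hinner : Continuous fun x : ℝ =>
      (if x ≤ Real.log (Real.sqrt (1/2)) then Real.exp (2*x)
       else x + 1/2 - (1/2)*Real.log (1/2)) := by
    apply Continuous.if_le (by continuity) (by continuity) continuous_id continuous_const
    intro x hx
    simp only [id_eq] at hx
    subst hx
    rw [hxb, hexb]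
    ring
  apply Continuous.if_le hinner (by continuity) continuous_const continuous_id
  intro x hx
  simp only [id_eq] at hx
  have hab : Real.log (Real.sqrt (θ/2)) ≤ Real.log (Real.sqrt ((1:ℝ)/2)) := by
    rw [hxa hθ0, hxb]
    have := Real.log_le_log_iff (x := θ/2) (y := (1:ℝ)/2) (by positivity) (by norm_num)
    have h2 : Real.log (θ/2) ≤ Real.log ((1:ℝ)/2) := this.mpr (by linarith)
    linarith
  rw [← hx, if_pos hab, hxa hθ0, hexa hθ0]
  ring

variable {θ : ℝ} {d : ℕ}

local notation "E" => EuclideanSpace ℂ (Fin d)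

lemma V15_eq (hθ0 : 0 < θ) {z : E} (hz : z ≠ 0) :
    V15 θ z = ((gth θ (Real.log ‖z‖) : ℝ) : EReal) := by
  have hnz : (0:ℝ) < ‖z‖ := norm_pos_iff.mpr hz
  have hA : (0:ℝ) < Real.sqrt (θ/2) := Real.sqrt_pos.mpr (by positivity)
  have hB : (0:ℝ) < Real.sqrt ((1:ℝ)/2) := Real.sqrt_pos.mpr (by norm_num)
  rw [V15, if_neg hz]
  unfold gth
  by_cases h1 : ‖z‖ < Real.sqrt (θ/2)
  · rw [if_pos h1, if_neg]
    rw [not_le]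
    exact (Real.log_lt_log_iff hnz hA).mpr h1
  · rw [if_neg h1]
    have h1' : Real.log (Real.sqrt (θ/2)) ≤ Real.log ‖z‖ :=
      (Real.log_le_log_iff hA hnz).mpr (not_lt.mp h1)
    rw [if_pos h1']
    by_cases h2 : ‖z‖ ≤ Real.sqrt ((1:ℝ)/2)
    · rw [if_pos h2, if_pos ((Real.log_le_log_iff hnz hB).mpr h2)]
      congr 1
      rw [show 2*Real.log ‖z‖ = Real.log ‖z‖ + Real.log ‖z‖ by ring, Real.exp_add,
        Real.exp_log hnz]
      ring
    · rw [if_neg h2, if_neg]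
      rw [not_le]
      exact (Real.log_lt_log_iff hB hnz).mpr (not_le.mp h2)

lemma gth_le_exp (hθ0 : 0 < θ) (hθ1 : θ < 1) (x : ℝ) : gth θ x ≤ Real.exp (2*x) := by
  unfold gth
  split_ifs with h1 h2
  · exact le_refl _
  · have := tangent_le_exp (s := 1) one_pos x
    linarith [this]
  · exact tangent_le_exp hθ0 x

lemma gth_le_linplus (hθ0 : 0 < θ) (hθ1 : θ < 1) (x : ℝ) :
    gth θ x ≤ max 0 x + (1/2 - (1/2)*Real.log ((1:ℝ)/2)) := by
  have hC : (1:ℝ)/2 ≤ 1/2 - (1/2)*Real.log ((1:ℝ)/2) := by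
    have : Real.log ((1:ℝ)/2) < 0 := Real.log_neg (by norm_num) (by norm_num)
    linarith
  have hc1C : θ/2 - (θ/2)*Real.log (θ/2) ≤ 1/2 - (1/2)*Real.log ((1:ℝ)/2) := by
    have h1 := P1 hθ0 hθ1 (le_of_lt hθ1) (le_refl 1) 0
    have h2 : gth θ 0 = 1/2 - (1/2)*Real.log ((1:ℝ)/2) := by
      unfold gth
      have ha : Real.log (Real.sqrt (θ/2)) ≤ 0 := by
        rw [hxa hθ0]
        have : Real.log (θ/2) < 0 := Real.log_neg (by positivity) (by linarith)
        linarith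
      have hb : ¬ ((0:ℝ) ≤ Real.log (Real.sqrt ((1:ℝ)/2))) := by
        rw [hxb, not_le]
        have : Real.log ((1:ℝ)/2) < 0 := Real.log_neg (by norm_num) (by norm_num)
        linarith
      rw [if_pos ha, if_neg hb]
      ring
    have h3 := P1 hθ0 hθ1 (le_refl θ) (le_of_lt hθ1) 0
    rw [h2] at h3
    linarith [h3]
  unfold gth
  split_ifs with h1 h2
  · -- middle: exp(2x) ≤ 1/2
    rw [hxb] at h2
    have : Real.exp (2*x) ≤ Real.exp (2*(Real.log ((1:ℝ)/2)/2)) :=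
      Real.exp_le_exp.mpr (by linarith)
    rw [hexb] at this
    have h0 : (0:ℝ) ≤ max 0 x := le_max_left _ _
    linarith
  · have : x ≤ max 0 x := le_max_right _ _
    linarith
  · have hθx : θ*x ≤ max 0 x := by
      rcases le_or_gt x 0 with h | h
      · have : θ*x ≤ 0 := mul_nonpos_of_nonneg_of_nonpos (le_of_lt hθ0) h
        linarith [le_max_left (0:ℝ) x]
      · have : θ*x ≤ x := by nlinarith
        linarith [le_max_right (0:ℝ) x]
    linarith

lemma gth_le_theta (hθ0 : 0 < θ) (hθ1 : θ < 1) {x : ℝ} (hx : x < 0) :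
    gth θ x ≤ θ*x + ((θ/2 - (θ/2)*Real.log (θ/2)) + 1 - θ*(Real.log (θ/2)/2)) := by
  have hla : Real.log (θ/2) < 0 := Real.log_neg (by positivity) (by linarith)
  have hc1 : (0:ℝ) ≤ θ/2 - (θ/2)*Real.log (θ/2) := by nlinarith
  unfold gth
  split_ifs with h1 h2
  · -- middle region : exp(2x) ≤ 1
    have he1 : Real.exp (2*x) ≤ 1 := Real.exp_le_one_iff.mpr (by linarith)
    rw [hxa hθ0] at h1
    nlinarith [mul_le_mul_of_nonneg_left h1 (le_of_lt hθ0)]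
  · -- outer region
    rw [hxa hθ0] at h1
    have hC : (1:ℝ)/2 - (1/2)*Real.log ((1:ℝ)/2) ≤ 1 := by
      have : Real.log ((1:ℝ)/2) = -Real.log 2 := by
        rw [one_div, Real.log_inv]
      rw [this]
      have h2 : Real.log 2 ≤ 1 := by
        have := Real.log_le_sub_one_of_pos (by norm_num : (0:ℝ) < 2)
        linarith
      linarith
    have hθx : x - θ*x ≤ 0 := by nlinarith
    nlinarith [mul_le_mul_of_nonneg_left h1 (le_of_lt hθ0)]
  · -- inner region : equality of linear parts
    have : θ*(Real.log (θ/2)/2) ≤ 0 := by nlinarith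
    linarith


/-- For `0 < θ < 1` and `φ(z) = |z|²`, the piecewise function `V` (equal to
`θ log|z| + θ/2 - (θ/2)log(θ/2)` for `|z| < √(θ/2)`, `|z|²` for
`√(θ/2) ≤ |z| ≤ √(1/2)`, and `log|z| + 1/2 - (1/2)log(1/2)` for `|z| ≥ √(1/2)`)
is continuous on `ℂ^d \ {0}`, satisfies `V ≤ φ` on `ℂ^d`, and belongs to `L_θ`. -/
theorem V15_properties {d : ℕ} (θ : ℝ) (hθ0 : 0 < θ) (hθ1 : θ < 1) :
    ContinuousOn (V15 (d := d) θ) {z | z ≠ 0} ∧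
    (∀ z : EuclideanSpace ℂ (Fin d), V15 θ z ≤ ((‖z‖ ^ 2 : ℝ) : EReal)) ∧
    MemLtheta θ (V15 (d := d) θ) := by
  have hV0 : V15 (d := d) θ 0 = ⊥ := by rw [V15, if_pos rfl]
  have hnotop : ∀ z : EuclideanSpace ℂ (Fin d), V15 θ z ≠ ⊤ := by
    intro z
    rw [V15]
    split_ifs
    · exact bot_ne_top
    · exact EReal.coe_ne_top _
    · exact EReal.coe_ne_top _
    · exact EReal.coe_ne_top _
  -- continuity away from 0
  have hcontAt : ∀ z : EuclideanSpace ℂ (Fin d), z ≠ 0 → ContinuousAt (V15 θ) z := by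
    intro z hz
    have h1 : ContinuousAt (fun w : EuclideanSpace ℂ (Fin d) => Real.log ‖w‖) z :=
      ContinuousAt.comp (x := z) (f := fun w : EuclideanSpace ℂ (Fin d) => ‖w‖)
        (Real.continuousAt_log (by simp [hz])) continuous_norm.continuousAt
    have h2 : ContinuousAt (fun w : EuclideanSpace ℂ (Fin d) =>
        (((gth θ (Real.log ‖w‖)) : ℝ) : EReal)) z :=
      ContinuousAt.comp (x := z)
        (f := fun w : EuclideanSpace ℂ (Fin d) => gth θ (Real.log ‖w‖))
        continuous_coe_real_ereal.continuousAt
        (ContinuousAt.comp (x := z)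
          (f := fun w : EuclideanSpace ℂ (Fin d) => Real.log ‖w‖)
          (gth_cont hθ0 hθ1).continuousAt h1)
    apply h2.congr
    filter_upwards [isOpen_compl_singleton.mem_nhds hz] with w hw
    exact (V15_eq hθ0 hw).symm
  have hContOn : ContinuousOn (V15 (d := d) θ) {z | z ≠ 0} :=
    fun z hz => (hcontAt z hz).continuousWithinAt
  -- the φ bound
  have hphi : ∀ z : EuclideanSpace ℂ (Fin d), V15 θ z ≤ ((‖z‖ ^ 2 : ℝ) : EReal) := by
    intro z
    by_cases hz : z = 0
    · rw [hz, hV0]; exact bot_le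
    · rw [V15_eq hθ0 hz, EReal.coe_le_coe_iff]
      have hnz : (0:ℝ) < ‖z‖ := norm_pos_iff.mpr hz
      have : Real.exp (2 * Real.log ‖z‖) = ‖z‖ ^ 2 := by
        rw [show 2*Real.log ‖z‖ = Real.log ‖z‖ + Real.log ‖z‖ by ring, Real.exp_add,
          Real.exp_log hnz]
        ring
      rw [← this]
      exact gth_le_exp hθ0 hθ1 _
  refine ⟨hContOn, hphi, ?_⟩
  -- upper semicontinuity
  have husc : UpperSemicontinuous (V15 (d := d) θ) := by
    intro z
    by_cases hz : z = 0
    · subst hz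
      intro y hy
      rw [hV0] at hy
      induction y using EReal.rec with
      | bot => exact absurd hy (lt_irrefl _)
      | top =>
        filter_upwards with w
        exact lt_of_le_of_ne le_top (hnotop w)
      | coe c =>
        have hδ1 : (0:ℝ) < Real.sqrt (θ/2) := Real.sqrt_pos.mpr (by positivity)
        set δ := min (Real.sqrt (θ/2)) (Real.exp ((c - (θ/2 - (θ/2)*Real.log (θ/2)))/θ)) with hδ
        have hδ0 : 0 < δ := lt_min hδ1 (Real.exp_pos _)
        filter_upwards [Metric.ball_mem_nhds (0 : EuclideanSpace ℂ (Fin d)) hδ0] with w hw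
        rw [Metric.mem_ball, dist_zero_right] at hw
        by_cases hw0 : w = 0
        · rw [hw0, hV0]; exact bot_lt_iff_ne_bot.mpr (by simp)
        · have hnw : (0:ℝ) < ‖w‖ := norm_pos_iff.mpr hw0
          rw [V15, if_neg hw0, if_pos (lt_of_lt_of_le hw (min_le_left _ _))]
          have hlt : Real.log ‖w‖ < (c - (θ/2 - (θ/2)*Real.log (θ/2)))/θ := by
            have := lt_of_lt_of_le hw (min_le_right _ _)
            exact (Real.log_lt_iff_lt_exp hnw).mpr this
          have hlt2 : θ * Real.log ‖w‖ < c - (θ/2 - (θ/2)*Real.log (θ/2)) := by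
            have := mul_lt_mul_of_pos_left hlt hθ0
            rwa [mul_div_cancel₀ _ (ne_of_gt hθ0)] at this
          exact EReal.coe_lt_coe_iff.mpr (by linarith)
    · intro y hy
      exact (hcontAt z hz).upperSemicontinuousAt y hy
  -- submean property
  have hsub : ∀ (a b : EuclideanSpace ℂ (Fin d)) (r : ℝ), 0 < r → ∀ n : ℕ,
      V15 θ a ≤ (((2 * Real.pi)⁻¹ * ∫ t in (0:ℝ)..(2 * Real.pi),
        (V15 θ (a + ((r : ℂ) * Complex.exp (t * Complex.I)) • b) ⊔
          ((-(n : ℝ) : ℝ) : EReal)).toReal : ℝ) : EReal) := by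
    intro a b r hr n
    by_cases ha : a = 0
    · rw [ha, hV0]; exact bot_le
    obtain ⟨s, hs1, hs2, hseq⟩ := P2 hθ0 hθ1 (Real.log ‖a‖)
    have hs0 : 0 < s := lt_of_lt_of_le hθ0 hs1
    obtain ⟨cs, hcs⟩ : ∃ cs : ℝ, cs = s/2 - s/2*Real.log (s/2) := ⟨_, rfl⟩
    obtain ⟨K, hK⟩ : ∃ K : ℝ, K = (-(n:ℝ) - cs)/s := ⟨_, rfl⟩
    set w : ℝ → EuclideanSpace ℂ (Fin d) :=
      fun t => a + ((r : ℂ) * Complex.exp (t * Complex.I)) • b with hwdef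
    set F : ℝ → ℝ := fun t => (V15 θ (w t) ⊔ ((-(n : ℝ) : ℝ) : EReal)).toReal with hF
    set G' : ℝ → ℝ := fun t => max (gth θ (Real.log ‖w t‖)) (-(n:ℝ)) with hG'
    set G : ℝ → ℝ := fun t => s * max (Real.log ‖w t‖) K + cs with hG
    have hna : (0:ℝ) < ‖a‖ := norm_pos_iff.mpr ha
    set R₀ : ℝ := ‖a‖ + |r| * ‖b‖ with hR₀
    have hR₀0 : 0 < R₀ := by
      have : (0:ℝ) ≤ |r| * ‖b‖ := by positivity
      linarith
    have hy : ∀ t, Real.log ‖w t‖ ≤ max 0 (Real.log R₀) := by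
      intro t
      rcases eq_or_lt_of_le (norm_nonneg (w t)) with h | h
      · rw [← h, Real.log_zero]; exact le_max_left _ _
      · exact le_max_of_le_right (Real.log_le_log h (wnorm_le a b r t))
    -- F = G' a.e.
    have hFG' : ∀ t, w t ≠ 0 → F t = G' t := by
      intro t ht
      rw [hF]
      simp only []
      rw [V15_eq hθ0 ht]
      rw [← Monotone.map_max (EReal.coe_strictMono.monotone)]
      exact EReal.toReal_coe _
    have hae : ∀ᵐ t : ℝ, w t ≠ 0 := by
      by_cases hb : b = 0
      · filter_upwards with t
        show a + ((r : ℂ) * Complex.exp (t * Complex.I)) • b ≠ 0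
        rw [hb, smul_zero, add_zero]
        exact ha
      · by_cases hex : ∃ t₀ : ℝ, w t₀ = 0
        · obtain ⟨t₀, ht₀⟩ := hex
          have hsubnull : {t : ℝ | w t = 0} ⊆
              {t : ℝ | Complex.exp (t * Complex.I) = Complex.exp (t₀ * Complex.I)} := by
            intro t ht
            simp only [Set.mem_setOf_eq] at *
            have ht' : a + ((r : ℂ) * Complex.exp (t * Complex.I)) • b = 0 := ht
            have ht₀' : a + ((r : ℂ) * Complex.exp (t₀ * Complex.I)) • b = 0 := ht₀
            have h1 : ((r : ℂ) * Complex.exp (t * Complex.I) -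
                (r : ℂ) * Complex.exp (t₀ * Complex.I)) • b = 0 := by
              rw [sub_smul]
              have h2 := sub_eq_zero.mpr (ht'.trans ht₀'.symm)
              rw [add_sub_add_left_eq_sub] at h2
              exact h2
            rcases smul_eq_zero.mp h1 with h2 | h2
            · have hrne : (r : ℂ) ≠ 0 := by
                simp only [ne_eq, Complex.ofReal_eq_zero]
                exact ne_of_gt hr
              have h3 := sub_eq_zero.mp h2
              exact mul_left_cancel₀ hrne h3
            · exact absurd h2 hb
          rw [MeasureTheory.ae_iff]
          push_neg
          exact measure_mono_null (by intro t ht; simpa using ht)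
            (measure_mono_null hsubnull (aux_null _))
        · push_neg at hex
          filter_upwards with t
          exact hex t
    -- pointwise G ≤ G'
    have hGG' : ∀ t, G t ≤ G' t := by
      intro t
      rw [hG, hG']
      simp only []
      have h1 : s * max (Real.log ‖w t‖) K + cs =
          max (s * Real.log ‖w t‖ + cs) (-(n:ℝ)) := by
        rw [mul_max_of_nonneg _ _ (le_of_lt hs0)]
        have hsK : s * K = -(n:ℝ) - cs := by
          rw [hK]; field_simp
        rw [hsK, ← max_add_add_right]
        congr 1
        ring
      rw [h1]
      apply max_le_max _ (le_refl _)
      have := P1 hθ0 hθ1 hs1 hs2 (Real.log ‖w t‖)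
      rw [hcs]
      linarith [this]
    -- integrability
    have hG'meas : Measurable G' := by
      have hsc : Continuous fun t : ℝ => ((r : ℂ) * Complex.exp ((t:ℂ) * Complex.I)) := by
        continuity
      have hwcont : Continuous w := by
        rw [hwdef]
        exact continuous_const.add (hsc.smul continuous_const)
      have hwc : Continuous fun t : ℝ => ‖w t‖ := continuous_norm.comp hwcont
      exact (((gth_cont hθ0 hθ1).measurable).comp
        (Real.measurable_log.comp hwc.measurable)).max measurable_const
    have hC0 : (0:ℝ) < 1/2 - (1/2)*Real.log ((1:ℝ)/2) := by
      have : Real.log ((1:ℝ)/2) < 0 := Real.log_neg (by norm_num) (by norm_num)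
      linarith
    have hG'bd : ∀ t, |G' t| ≤ (n:ℝ) + (1/2 - (1/2)*Real.log ((1:ℝ)/2)) + max 0 (Real.log R₀) := by
      intro t
      rw [abs_le]
      have hmax0 : (0:ℝ) ≤ max 0 (Real.log R₀) := le_max_left _ _
      constructor
      · have : -(n:ℝ) ≤ G' t := le_max_right _ _
        have hn0 : (0:ℝ) ≤ (n:ℝ) := Nat.cast_nonneg n
        linarith
      · rw [hG']
        simp only []
        apply max_le
        · have h1 := gth_le_linplus hθ0 hθ1 (Real.log ‖w t‖)
          have h2 : max 0 (Real.log ‖w t‖) ≤ max 0 (Real.log R₀) :=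
            max_le hmax0 (hy t)
          have hn0 : (0:ℝ) ≤ (n:ℝ) := Nat.cast_nonneg n
          linarith
        · have hn0 : (0:ℝ) ≤ (n:ℝ) := Nat.cast_nonneg n
          linarith
    have hG'int : IntervalIntegrable G' volume 0 (2 * Real.pi) :=
      bdd_intervalIntegrable hG'meas hG'bd
    have hGint : IntervalIntegrable G volume 0 (2 * Real.pi) := by
      rw [hG]
      exact ((intInt_wnorm a b r K).const_mul s).add intervalIntegrable_const
    -- ∫ F = ∫ G'
    have hFint : ∫ t in (0:ℝ)..(2 * Real.pi), F t = ∫ t in (0:ℝ)..(2 * Real.pi), G' t := by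
      apply intervalIntegral.integral_congr_ae
      filter_upwards [hae] with t ht _
      exact hFG' t ht
    -- ∫ G ≤ ∫ G'
    have hGG'int : ∫ t in (0:ℝ)..(2 * Real.pi), G t ≤ ∫ t in (0:ℝ)..(2 * Real.pi), G' t :=
      intervalIntegral.integral_mono_on (by positivity) hGint hG'int (fun t _ => hGG' t)
    -- ∫ G = s * ∫ max + 2π cs
    have hGsplit : ∫ t in (0:ℝ)..(2 * Real.pi), G t =
        s * (∫ t in (0:ℝ)..(2 * Real.pi), max (Real.log ‖w t‖) K) + 2 * Real.pi * cs := by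
      rw [hG]
      rw [intervalIntegral.integral_add ((intInt_wnorm a b r K).const_mul s)
        intervalIntegrable_const]
      rw [intervalIntegral.integral_const_mul, intervalIntegral.integral_const]
      simp
      left; rfl
    have hB := lemB a b ha r K
    -- conclude
    rw [V15_eq hθ0 ha, hseq, EReal.coe_le_coe_iff]
    have h2π : (0:ℝ) < 2 * Real.pi := by positivity
    have hchain : 2 * Real.pi * (s * Real.log ‖a‖ + cs) ≤
        ∫ t in (0:ℝ)..(2 * Real.pi), F t := by
      rw [hFint]
      have h1 : s * (2 * Real.pi * Real.log ‖a‖) ≤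
          s * (∫ t in (0:ℝ)..(2 * Real.pi), max (Real.log ‖w t‖) K) :=
        mul_le_mul_of_nonneg_left hB (le_of_lt hs0)
      calc 2 * Real.pi * (s * Real.log ‖a‖ + cs)
          = s * (2 * Real.pi * Real.log ‖a‖) + 2 * Real.pi * cs := by ring
        _ ≤ s * (∫ t in (0:ℝ)..(2 * Real.pi), max (Real.log ‖w t‖) K) + 2 * Real.pi * cs := by
            linarith
        _ = ∫ t in (0:ℝ)..(2 * Real.pi), G t := hGsplit.symm
        _ ≤ _ := hGG'int
    have : s * Real.log ‖a‖ + cs ≤ (2 * Real.pi)⁻¹ * ∫ t in (0:ℝ)..(2 * Real.pi), F t := by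
      rw [show s * Real.log ‖a‖ + cs =
        (2 * Real.pi)⁻¹ * (2 * Real.pi * (s * Real.log ‖a‖ + cs)) by field_simp]
      exact mul_le_mul_of_nonneg_left hchain (by positivity)
    calc (s * Real.log ‖a‖ + s/2 - s/2 * Real.log (s/2) : ℝ)
        = s * Real.log ‖a‖ + cs := by rw [hcs]; ring
      _ ≤ _ := this
  -- assemble MemLtheta
  refine ⟨⟨⟨husc, hnotop, hsub⟩, ⟨1/2 - (1/2)*Real.log ((1:ℝ)/2), ?_⟩⟩,
    ⟨(θ/2 - (θ/2)*Real.log (θ/2)) + 1 - θ*(Real.log (θ/2)/2), ?_⟩⟩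
  · intro z
    by_cases hz : z = 0
    · rw [hz, hV0]; exact bot_le
    · rw [V15_eq hθ0 hz, EReal.coe_le_coe_iff]
      exact gth_le_linplus hθ0 hθ1 _
  · intro z hz1
    by_cases hz : z = 0
    · rw [hz, hV0]; exact bot_le
    · have hnz : (0:ℝ) < ‖z‖ := norm_pos_iff.mpr hz
      have helog : elog ‖z‖ = ((Real.log ‖z‖ : ℝ) : EReal) := by
        rw [elog, if_neg (not_le.mpr hnz)]
      rw [V15_eq hθ0 hz, helog, ← EReal.coe_mul, ← EReal.coe_add, EReal.coe_le_coe_iff]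
      exact gth_le_theta hθ0 hθ1 (Real.log_neg hnz hz1)

end AuxForV15
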